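/- Let ξ, η : [0,∞) → ℝ be differentiable functions satisfying ξ'(t) = η(t) and η'(t) = ξ(t)·(3η(t) − ξ(t)² − 1) for all t ≥ 0. Then ξ(0)² + 1 − 2η(0) > 0. -/

import Mathlib

open Real Set intervalIntegral

/-- Any solution of `ξ' = η`, `η' = ξ(3η - ξ² - 1)` existing for all `t ≥ 0` must satisfy
`ξ(0)² + 1 - 2η(0) > 0` (otherwise it blows up in finite time). -/
theorem stmt_18 (ξ η : ℝ → ℝ)
    (hξ : ∀ t : ℝ, 0 ≤ t → HasDerivWithinAt ξ (η t) (Set.Ici 0) t)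
    (hη : ∀ t : ℝ, 0 ≤ t →
      HasDerivWithinAt η (ξ t * (3 * η t - (ξ t) ^ 2 - 1)) (Set.Ici 0) t) :
    0 < (ξ 0) ^ 2 + 1 - 2 * η 0 := by
  by_contra hcon
  push_neg at hcon
  set u : ℝ → ℝ := fun t => (ξ t) ^ 2 + 1 - 2 * η t with hu_def
  have hξcont : ContinuousOn ξ (Ici 0) := fun t ht => (hξ t ht).continuousWithinAt
  have hηcont : ContinuousOn η (Ici 0) := fun t ht => (hη t ht).continuousWithinAt
  have hucont : ContinuousOn u (Ici 0) :=
    ((hξcont.pow 2).add continuousOn_const).sub (continuousOn_const.mul hηcont)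
  have hu : ∀ t : ℝ, 0 ≤ t → HasDerivWithinAt u (2 * ξ t * u t) (Ici 0) t := by
    intro t ht
    have h1 := (((hξ t ht).pow 2).add_const 1).sub ((hη t ht).const_mul 2)
    refine h1.congr_deriv ?_
    simp only [hu_def]
    ring
  -- primitive of 2ξ
  set f : ℝ → ℝ := fun s => 2 * ξ s with hf_def
  have hfcont : ContinuousOn f (Ici 0) := continuousOn_const.mul hξcont
  set G : ℝ → ℝ := fun t => ∫ s in (0:ℝ)..t, f s with hG_def
  have hGder : ∀ x : ℝ, 0 ≤ x → HasDerivWithinAt G (f x) (Ici x) x := by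
    intro x hx
    have hint : IntervalIntegrable f MeasureTheory.volume 0 x := by
      apply ContinuousOn.intervalIntegrable
      apply hfcont.mono
      rw [uIcc_of_le hx]
      exact Icc_subset_Ici_self
    have hmeas : StronglyMeasurableAtFilter f (nhdsWithin x (Ioi x)) :=
      ⟨Ici 0, Filter.mem_of_superset self_mem_nhdsWithin
        (fun a ha => le_of_lt (lt_of_le_of_lt hx ha)),
        hfcont.aestronglyMeasurable measurableSet_Ici⟩
    have hcw : ContinuousWithinAt f (Ioi x) x :=
      (hfcont x (mem_Ici.2 hx)).mono (fun a ha => le_of_lt (lt_of_le_of_lt hx ha))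
    exact intervalIntegral.integral_hasDerivWithinAt_right hint hmeas hcw
  have hGcont : ∀ T : ℝ, 0 ≤ T → ContinuousOn G (Icc 0 T) := by
    intro T hT
    have : ContinuousOn G (uIcc 0 T) := by
      apply continuousOn_primitive_interval
      apply (hfcont.mono ?_).integrableOn_compact isCompact_uIcc
      rw [uIcc_of_le hT]; exact Icc_subset_Ici_self
    rwa [uIcc_of_le hT] at this
  -- sign preservation: u t ≤ 0 for all t ≥ 0
  have hunonpos : ∀ t : ℝ, 0 ≤ t → u t ≤ 0 := by
    intro T hT
    set F : ℝ → ℝ := fun t => u t * Real.exp (-G t) with hF_def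
    have hFcont : ContinuousOn F (Icc 0 T) :=
      (hucont.mono Icc_subset_Ici_self).mul
        ((Real.continuous_exp.comp_continuousOn ((hGcont T hT).neg)))
    have hFder : ∀ x ∈ Ico (0:ℝ) T, HasDerivWithinAt F 0 (Ici x) x := by
      intro x hx
      have hx0 : (0:ℝ) ≤ x := hx.1
      have hsub : Ici x ⊆ Ici (0:ℝ) := Ici_subset_Ici.2 hx0
      have hu' : HasDerivWithinAt u (2 * ξ x * u x) (Ici x) x := (hu x hx0).mono hsub
      have hG' : HasDerivWithinAt G (f x) (Ici x) x := hGder x hx0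
      have hexp : HasDerivWithinAt (fun t => Real.exp (-G t))
          (Real.exp (-G x) * (-f x)) (Ici x) x :=
        ((Real.hasDerivAt_exp (-G x)).comp_hasDerivWithinAt x hG'.neg :)
      have := hu'.mul hexp
      refine this.congr_deriv ?_
      simp only [hf_def]
      ring
    have hconst := constant_of_has_deriv_right_zero hFcont hFder T (right_mem_Icc.2 hT)
    have hF0 : F 0 = u 0 := by
      simp [hF_def, hG_def, intervalIntegral.integral_same]
    have hu0 : u 0 ≤ 0 := by simpa [hu_def] using hcon
    have hFT : u T * Real.exp (-G T) ≤ 0 := by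
      rw [show u T * Real.exp (-G T) = F T from rfl, hconst, hF0]
      exact hu0
    nlinarith [Real.exp_pos (-G T)]
  -- hence η t ≥ (1 + ξ t ^ 2)/2, so arctan ξ grows at least t/2
  set A : ℝ → ℝ := fun t => Real.arctan (ξ t) - t / 2 with hA_def
  have hAder : ∀ x : ℝ, 0 < x →
      HasDerivAt A (1 / (1 + ξ x ^ 2) * η x - 1 / 2) x := by
    intro x hx
    have hξ' : HasDerivAt ξ (η x) x :=
      (hξ x hx.le).hasDerivAt (Ici_mem_nhds hx)
    have h1 : HasDerivAt (fun t => Real.arctan (ξ t)) (1 / (1 + ξ x ^ 2) * η x) x :=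
      (Real.hasDerivAt_arctan (ξ x)).comp x hξ'
    exact h1.sub ((hasDerivAt_id x).div_const 2)
  have hAmono : MonotoneOn A (Ici 0) := by
    apply monotoneOn_of_deriv_nonneg (convex_Ici 0)
    · exact ((Real.continuous_arctan.comp_continuousOn hξcont).sub
        (continuousOn_id.div_const 2))
    · intro x hx
      rw [interior_Ici] at hx
      exact ((hAder x hx).differentiableAt).differentiableWithinAt
    · intro x hx
      rw [interior_Ici] at hx
      rw [(hAder x hx).deriv]
      have hpos : (0:ℝ) < 1 + ξ x ^ 2 := by positivity
      have hηge : 1 + ξ x ^ 2 ≤ 2 * η x := by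
        have := hunonpos x hx.le
        simp only [hu_def] at this
        linarith
      rw [sub_nonneg, div_mul_eq_mul_div, le_div_iff₀ hpos]
      linarith
  -- contradiction at t = 7
  have h7 : A 0 ≤ A 7 := hAmono (mem_Ici.2 (le_refl 0)) (by norm_num) (by norm_num)
  simp only [hA_def] at h7
  have hb1 : Real.arctan (ξ 7) < π / 2 := Real.arctan_lt_pi_div_two _
  have hb2 : -(π / 2) < Real.arctan (ξ 0) := Real.neg_pi_div_two_lt_arctan _
  have hpi : π < 3.15 := by linarith [Real.pi_lt_d2]
  linarith
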